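/- arXiv:2004.01040 — 4 statements merged into one kernel-verified Lean document; each statement's English description precedes it below -/
import Mathlib

section
/- Let K be a field with char(K) ≠ 2 and a, b ∈ K nonzero. The quaternion algebra H_K(a,b) splits if and only if the conic a x² + b y² = z² has a nontrivial K-rational point. -/
open Quaternion Matrix

private lemma equiv_of_basis' {K : Type*} [Field K] {a b : K}
    (Q : QuaternionAlgebra.Basis (Matrix (Fin 2) (Fin 2) K) a 0 b)
    (hi : Function.Injective Q.liftHom) :
    Nonempty (ℍ[K, a, b] ≃ₐ[K] Matrix (Fin 2) (Fin 2) K) := by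
  have hdim : Module.finrank K ℍ[K,a,b] = Module.finrank K (Matrix (Fin 2) (Fin 2) K) := by
    rw [QuaternionAlgebra.finrank_eq_four, Module.finrank_matrix]
    simp
  have hs : Function.Surjective Q.liftHom := by
    have := (LinearMap.injective_iff_surjective_of_finrank_eq_finrank
      (f := Q.liftHom.toLinearMap) hdim).mp
    exact this hi
  exact ⟨AlgEquiv.ofBijective Q.liftHom ⟨hi, hs⟩⟩

private lemma inj_of_ker {K : Type*} [Field K] {a b : K}
    (Q : QuaternionAlgebra.Basis (Matrix (Fin 2) (Fin 2) K) a 0 b)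
    (h : ∀ X : ℍ[K,a,b], Q.liftHom X = 0 → X = 0) :
    Function.Injective Q.liftHom := by
  intro X Y hXY
  have : Q.liftHom (X - Y) = 0 := by rw [map_sub, hXY, sub_self]
  exact sub_eq_zero.mp (h _ this)

private lemma lift_eval {K : Type*} [Field K] {a b : K}
    (Q : QuaternionAlgebra.Basis (Matrix (Fin 2) (Fin 2) K) a 0 b)
    (w x y z : K) :
    Q.liftHom (⟨w, x, y, z⟩ : ℍ[K,a,b]) =
      algebraMap K _ w + x • Q.i + y • Q.j + z • Q.k := rfl

set_option maxHeartbeats 1000000 in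
private lemma splits_of_sq {K : Type*} [Field K] {a b c : K} (h2 : (2:K) ≠ 0)
    (hb : b ≠ 0) (hc : c ≠ 0) (hac : a = c ^ 2) :
    Nonempty (ℍ[K, a, b] ≃ₐ[K] Matrix (Fin 2) (Fin 2) K) := by
  refine equiv_of_basis'
    { i := !![c, 0; 0, -c]
      j := !![0, 1; b, 0]
      k := !![0, c; -(b*c), 0]
      i_mul_i := by
        rw [hac]
        ext i j; fin_cases i <;> fin_cases j <;>
          simp [Matrix.mul_apply, Fin.sum_univ_two, Matrix.one_apply] <;> ring
      j_mul_j := by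
        ext i j; fin_cases i <;> fin_cases j <;>
          simp [Matrix.mul_apply, Fin.sum_univ_two, Matrix.one_apply]
      i_mul_j := by
        ext i j; fin_cases i <;> fin_cases j <;>
          simp [Matrix.mul_apply, Fin.sum_univ_two] <;> ring
      j_mul_i := by
        ext i j; fin_cases i <;> fin_cases j <;>
          simp [Matrix.mul_apply, Fin.sum_univ_two] <;> ring } (inj_of_ker _ ?_)
  rintro ⟨w, x, y, z⟩ hX
  rw [lift_eval] at hX
  simp only at hX
  have hM : algebraMap K (Matrix (Fin 2) (Fin 2) K) w + x • !![c, 0; 0, -c] +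
      y • !![0, 1; b, 0] + z • !![0, c; -(b*c), 0] =
      !![w + x*c, y + z*c; y*b + z*(-(b*c)), w + x*(-c)] := by
    ext i j
    fin_cases i <;> fin_cases j <;>
      simp [Matrix.algebraMap_matrix_apply] <;> ring
  rw [hM] at hX
  have E00 : w + x*c = 0 := by simpa using congrFun (congrFun hX 0) 0
  have E01 : y + z*c = 0 := by simpa using congrFun (congrFun hX 0) 1
  have E10 : y*b + z*(-(b*c)) = 0 := by simpa using congrFun (congrFun hX 1) 0
  have E11 : w + x*(-c) = 0 := by simpa using congrFun (congrFun hX 1) 1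
  have hw : w = 0 := by
    have h : (2:K) * w = 0 := by linear_combination E00 + E11
    exact (mul_eq_zero.mp h).resolve_left h2
  have hx : x = 0 := by
    have h : ((2:K) * c) * x = 0 := by linear_combination E00 - E11
    exact (mul_eq_zero.mp h).resolve_left (mul_ne_zero h2 hc)
  have hy : y = 0 := by
    have h : ((2:K) * b) * y = 0 := by linear_combination b * E01 + E10
    exact (mul_eq_zero.mp h).resolve_left (mul_ne_zero h2 hb)
  have hz : z = 0 := by
    have h : (((2:K) * b) * c) * z = 0 := by linear_combination b * E01 - E10
    exact (mul_eq_zero.mp h).resolve_left (mul_ne_zero (mul_ne_zero h2 hb) hc)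
  ext <;> simp [hw, hx, hy, hz]

set_option maxHeartbeats 1000000 in
private lemma splits_of_norm {K : Type*} [Field K] {a b u v : K} (h2 : (2:K) ≠ 0)
    (ha : a ≠ 0) (hb : b ≠ 0) (hbuv : b = u ^ 2 - a * v ^ 2) :
    Nonempty (ℍ[K, a, b] ≃ₐ[K] Matrix (Fin 2) (Fin 2) K) := by
  refine equiv_of_basis'
    { i := !![0, 1; a, 0]
      j := !![u, v; -(a*v), -u]
      k := !![-(a*v), -u; a*u, a*v]
      i_mul_i := by
        ext i j; fin_cases i <;> fin_cases j <;>
          simp [Matrix.mul_apply, Fin.sum_univ_two, Matrix.one_apply]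
      j_mul_j := by
        rw [hbuv]
        ext i j; fin_cases i <;> fin_cases j <;>
          simp [Matrix.mul_apply, Fin.sum_univ_two, Matrix.one_apply] <;> ring
      i_mul_j := by
        ext i j; fin_cases i <;> fin_cases j <;>
          simp [Matrix.mul_apply, Fin.sum_univ_two] <;> ring
      j_mul_i := by
        ext i j; fin_cases i <;> fin_cases j <;>
          simp [Matrix.mul_apply, Fin.sum_univ_two] <;> ring } (inj_of_ker _ ?_)
  rintro ⟨w, x, y, z⟩ hX
  rw [lift_eval] at hX
  simp only at hX
  have hM : algebraMap K (Matrix (Fin 2) (Fin 2) K) w + x • !![0, 1; a, 0] +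
      y • !![u, v; -(a*v), -u] + z • !![-(a*v), -u; a*u, a*v] =
      !![w + y*u + z*(-(a*v)), x + y*v + z*(-u);
         x*a + y*(-(a*v)) + z*(a*u), w + y*(-u) + z*(a*v)] := by
    ext i j
    fin_cases i <;> fin_cases j <;>
      simp [Matrix.algebraMap_matrix_apply] <;> ring
  rw [hM] at hX
  have E00 : w + y*u + z*(-(a*v)) = 0 := by
    simpa using congrFun (congrFun hX 0) 0
  have E01 : x + y*v + z*(-u) = 0 := by
    simpa using congrFun (congrFun hX 0) 1
  have E10 : x*a + y*(-(a*v)) + z*(a*u) = 0 := by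
    simpa using congrFun (congrFun hX 1) 0
  have E11 : w + y*(-u) + z*(a*v) = 0 := by
    simpa using congrFun (congrFun hX 1) 1
  have hw : w = 0 := by
    have h : (2:K) * w = 0 := by linear_combination E00 + E11
    exact (mul_eq_zero.mp h).resolve_left h2
  have hx : x = 0 := by
    have h : ((2:K) * a) * x = 0 := by linear_combination a * E01 + E10
    exact (mul_eq_zero.mp h).resolve_left (mul_ne_zero h2 ha)
  have f1 : y*u - a*v*z = 0 := by linear_combination E00 - hw
  have f2 : y*v - u*z = 0 := by linear_combination E01 - hx
  have hy : y = 0 := by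
    have h : b * y = 0 := by linear_combination u * f1 - a*v * f2 + y * hbuv
    exact (mul_eq_zero.mp h).resolve_left hb
  have hz : z = 0 := by
    have h : b * z = 0 := by linear_combination v * f1 - u * f2 + z * hbuv
    exact (mul_eq_zero.mp h).resolve_left hb
  ext <;> simp [hw, hx, hy, hz]

set_option maxHeartbeats 1000000 in
/-- `H_K(a,b)` splits iff the conic `a x² + b y² = z²` has a
nontrivial `K`-rational point. -/
theorem quaternionAlgebra_splits_iff_conic_has_point
    (K : Type*) [Field K] (hK : ringChar K ≠ 2) (a b : K) (ha : a ≠ 0) (hb : b ≠ 0) :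
    Nonempty (ℍ[K, a, b] ≃ₐ[K] Matrix (Fin 2) (Fin 2) K) ↔
      ∃ x y z : K, (x, y, z) ≠ (0, 0, 0) ∧ a * x ^ 2 + b * y ^ 2 = z ^ 2 := by
  have h2 : (2:K) ≠ 0 := Ring.two_ne_zero hK
  constructor
  · rintro ⟨φ⟩
    set q : ℍ[K,a,b] := φ.symm (Matrix.single 0 1 1) with hqdef
    have hq0 : q ≠ 0 := by
      intro h
      have h1 : (Matrix.single 0 1 1 : Matrix (Fin 2) (Fin 2) K) = 0 := by
        have := congrArg φ h
        simpa [hqdef] using this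
      simpa using congrFun (congrFun h1 0) 1
    have hN : q.re^2 - a*q.imI^2 - b*q.imJ^2 + a*b*q.imK^2 = 0 := by
      by_contra hN
      have hqs : q * star q =
          ((q.re^2 - a*q.imI^2 - b*q.imJ^2 + a*b*q.imK^2 : K) : ℍ[K,a,b]) := by
        ext <;>
          simp only [QuaternionAlgebra.re_mul, QuaternionAlgebra.imI_mul,
            QuaternionAlgebra.imJ_mul, QuaternionAlgebra.imK_mul,
            QuaternionAlgebra.re_star, QuaternionAlgebra.imI_star,
            QuaternionAlgebra.imJ_star, QuaternionAlgebra.imK_star,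
            QuaternionAlgebra.re_coe, QuaternionAlgebra.imI_coe,
            QuaternionAlgebra.imJ_coe, QuaternionAlgebra.imK_coe] <;>
          ring
      have hsq : star q * q =
          ((q.re^2 - a*q.imI^2 - b*q.imJ^2 + a*b*q.imK^2 : K) : ℍ[K,a,b]) := by
        ext <;>
          simp only [QuaternionAlgebra.re_mul, QuaternionAlgebra.imI_mul,
            QuaternionAlgebra.imJ_mul, QuaternionAlgebra.imK_mul,
            QuaternionAlgebra.re_star, QuaternionAlgebra.imI_star,
            QuaternionAlgebra.imJ_star, QuaternionAlgebra.imK_star,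
            QuaternionAlgebra.re_coe, QuaternionAlgebra.imI_coe,
            QuaternionAlgebra.imJ_coe, QuaternionAlgebra.imK_coe] <;>
          ring
      have hu : IsUnit q := by
        refine ⟨⟨q, star q *
          (((q.re^2 - a*q.imI^2 - b*q.imJ^2 + a*b*q.imK^2)⁻¹ : K) : ℍ[K,a,b]), ?_, ?_⟩, rfl⟩
        · rw [← mul_assoc, hqs, ← QuaternionAlgebra.coe_mul, mul_inv_cancel₀ hN,
            QuaternionAlgebra.coe_one]
        · rw [mul_assoc, QuaternionAlgebra.coe_commutes, ← mul_assoc, hsq,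
            ← QuaternionAlgebra.coe_mul, mul_inv_cancel₀ hN, QuaternionAlgebra.coe_one]
      have hum := hu.map φ
      rw [show φ q = Matrix.single 0 1 1 from φ.apply_symm_apply _,
        Matrix.isUnit_iff_isUnit_det] at hum
      rw [show (Matrix.single 0 1 (1:K) : Matrix (Fin 2) (Fin 2) K).det = 0 by
        simp [Matrix.det_fin_two, Matrix.single]] at hum
      simpa using hum
    by_cases hS : a * q.imI^2 + b * q.imJ^2 = 0
    · by_cases hxy : q.imI = 0 ∧ q.imJ = 0
      · obtain ⟨hx, hy⟩ := hxy
        have hw : q.re^2 + a*b*q.imK^2 = 0 := by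
          rw [hx, hy] at hN; linear_combination hN
        have hz : q.imK ≠ 0 := by
          intro hz
          rw [hz] at hw
          have hre : q.re = 0 := by
            refine pow_eq_zero_iff (n := 2) (by norm_num) |>.mp ?_
            linear_combination hw
          exact hq0 (QuaternionAlgebra.ext hre hx hy hz)
        have hw0 : q.re ≠ 0 := by
          intro h
          rw [h] at hw
          have hab : a * (b * q.imK^2) = 0 := by linear_combination hw
          rcases mul_eq_zero.mp hab with h' | h'
          · exact ha h'
          · rcases mul_eq_zero.mp h' with h'' | h''
            · exact hb h''
            · exact hz (pow_eq_zero_iff (by norm_num) |>.mp h'')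
        refine ⟨(a+1)*q.re, (a-1)*a*q.imK, 2*a*q.re, ?_, ?_⟩
        · simp only [ne_eq, Prod.mk.injEq, not_and]
          intro _ _ h
          exact (mul_ne_zero (mul_ne_zero h2 ha) hw0) h
        · linear_combination (a*(a-1)^2) * hw
      · refine ⟨q.imI, q.imJ, 0, ?_, by rw [hS]; ring⟩
        intro hc
        apply hxy
        exact ⟨congrArg Prod.fst hc, congrArg Prod.fst (congrArg Prod.snd hc)⟩
    · refine ⟨q.re * q.imI + b * q.imJ * q.imK,
        q.re * q.imJ - a * q.imI * q.imK,
        a * q.imI^2 + b * q.imJ^2, ?_, ?_⟩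
      · simp only [ne_eq, Prod.mk.injEq, not_and]
        intro _ _
        exact hS
      · linear_combination (a * q.imI^2 + b * q.imJ^2) * hN
  · rintro ⟨x, y, z, hxyz, hpt⟩
    by_cases hy : y = 0
    · subst hy
      by_cases hx : x = 0
      · exfalso
        apply hxyz
        subst hx
        have hz : z = 0 := by
          refine pow_eq_zero_iff (n := 2) (by norm_num) |>.mp ?_
          linear_combination -hpt
        simp [hz]
      · have hz : z ≠ 0 := by
          intro hz
          rw [hz] at hpt
          have h' : a * x^2 = 0 := by linear_combination hpt
          rcases mul_eq_zero.mp h' with h'' | h''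
          · exact ha h''
          · exact hx (pow_eq_zero_iff (by norm_num) |>.mp h'')
        exact splits_of_sq h2 hb (div_ne_zero hz hx) (by field_simp; linear_combination hpt)
    · exact splits_of_norm h2 ha hb (u := z/y) (v := x/y)
        (by field_simp; linear_combination hpt)
end

section
/- Let F be a field with char(F) ≠ 2 and a, b ∈ F nonzero. The quaternion algebra H_F(a,b) splits if and only if a is a norm from the extension F(√b)/F. -/
open Quaternion

/-- If `b` is the square of a nonzero element, then every element of `F` is a norm
from `F(√b) = F`. -/
private lemma quaternion_isNorm_aux_sq {F : Type*} [Field F] (h2 : (2:F) ≠ 0) (a b β : F)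
    (hβ : β ≠ 0) (hb : b = β ^ 2) :
    ∃ x y : F, a = x ^ 2 - b * y ^ 2 := by
  refine ⟨(a+1)/2, (a-1)/(2*β), ?_⟩
  subst hb
  field_simp
  ring

/-- `H_F(a,b)` splits iff `a` is a norm from `F(√b)/F`,
i.e. `a = x² − b y²` for some `x, y ∈ F`. -/
theorem quaternionAlgebra_splits_iff_isNorm
    (F : Type*) [Field F] (hF : ringChar F ≠ 2) (a b : F) (ha : a ≠ 0) (hb : b ≠ 0) :
    Nonempty (ℍ[F, a, b] ≃ₐ[F] Matrix (Fin 2) (Fin 2) F) ↔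
      ∃ x y : F, a = x ^ 2 - b * y ^ 2 := by
  have h2 : (2 : F) ≠ 0 := Ring.two_ne_zero hF
  constructor
  · rintro ⟨e⟩
    set E₁ : Matrix (Fin 2) (Fin 2) F := Matrix.single 0 0 1 with hE₁def
    set E₂ : Matrix (Fin 2) (Fin 2) F := Matrix.single 1 1 1 with hE₂def
    have hE₁ : E₁ ≠ 0 := by
      intro h
      have := congrFun (congrFun h 0) 0
      simp [hE₁def, Matrix.single] at this
    have hE₂ : E₂ ≠ 0 := by
      intro h
      have := congrFun (congrFun h 1) 1
      simp [hE₂def, Matrix.single] at this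
    have hE12 : E₁ * E₂ = 0 := by
      ext i j
      fin_cases i <;> fin_cases j <;>
        simp [hE₁def, hE₂def, Matrix.mul_apply, Fin.sum_univ_two, Matrix.single]
    set q := e.symm E₁ with hqdef
    set q' := e.symm E₂ with hq'def
    have hq : q ≠ 0 := fun h => hE₁ (by rw [← e.apply_symm_apply E₁, ← hqdef, h, map_zero])
    have hq' : q' ≠ 0 := fun h => hE₂ (by rw [← e.apply_symm_apply E₂, ← hq'def, h, map_zero])
    have hqq' : q * q' = 0 := by
      rw [hqdef, hq'def, ← map_mul, hE12, map_zero]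
    clear_value q q'
    obtain ⟨w, p, r, s⟩ := q
    set c : F := w ^ 2 - a * p ^ 2 - b * r ^ 2 + a * b * s ^ 2 with hcdef
    have hc : star (⟨w, p, r, s⟩ : ℍ[F,a,b]) * ⟨w, p, r, s⟩ = c • (1 : ℍ[F,a,b]) := by
      ext <;>
        simp [hcdef, QuaternionAlgebra.mk_mul_mk] <;> ring
    have key : c • q' = 0 := by
      calc c • q' = (c • (1 : ℍ[F,a,b])) * q' := by rw [smul_mul_assoc, one_mul]
      _ = star (⟨w, p, r, s⟩ : ℍ[F,a,b]) * (⟨w, p, r, s⟩ * q') := by rw [← hc, mul_assoc]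
      _ = 0 := by rw [hqq', mul_zero]
    have hc0 : c = 0 := (smul_eq_zero.mp key).resolve_right hq'
    rw [hcdef] at hc0
    by_cases hd : p ^ 2 - b * s ^ 2 = 0
    · by_cases hs : s = 0
      · have hp : p = 0 := by
          have : p ^ 2 = 0 := by rw [hs] at hd; linear_combination hd
          exact pow_eq_zero_iff (n := 2) (by norm_num) |>.mp this
        by_cases hr : r = 0
        · exfalso
          apply hq
          have hw : w = 0 := by
            have : w ^ 2 = 0 := by rw [hp, hr, hs] at hc0; linear_combination hc0
            exact pow_eq_zero_iff (n := 2) (by norm_num) |>.mp this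
          simp [QuaternionAlgebra.ext_iff, hw, hp, hr, hs]
        · have hw : w ≠ 0 := by
            intro hw
            apply hr
            have : b * r ^ 2 = 0 := by rw [hw, hp, hs] at hc0; linear_combination -hc0
            have := (mul_eq_zero.mp this).resolve_left hb
            exact pow_eq_zero_iff (n := 2) (by norm_num) |>.mp this
          refine quaternion_isNorm_aux_sq h2 a b (w / r) (div_ne_zero hw hr) ?_
          rw [hp, hs] at hc0
          field_simp
          linear_combination -hc0
      · have hp : p ≠ 0 := by
          intro hp
          apply hs
          have : b * s ^ 2 = 0 := by rw [hp] at hd; linear_combination -hd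
          have := (mul_eq_zero.mp this).resolve_left hb
          exact pow_eq_zero_iff (n := 2) (by norm_num) |>.mp this
        refine quaternion_isNorm_aux_sq h2 a b (p / s) (div_ne_zero hp hs) ?_
        field_simp
        linear_combination -hd
    · refine ⟨(w * p - b * r * s) / (p ^ 2 - b * s ^ 2),
        (p * r - w * s) / (p ^ 2 - b * s ^ 2), ?_⟩
      field_simp
      linear_combination (-(p ^ 2 - b * s ^ 2)) * hc0
  · rintro ⟨x, y, hxy⟩
    subst hxy
    set a := x ^ 2 - b * y ^ 2 with hadef
    let I : Matrix (Fin 2) (Fin 2) F := !![x, y; -(y*b), -x]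
    let J : Matrix (Fin 2) (Fin 2) F := !![0, 1; b, 0]
    have hII : I * I = a • (1 : Matrix (Fin 2) (Fin 2) F) := by
      ext i j
      fin_cases i <;> fin_cases j <;>
        simp [I, Matrix.mul_apply, Fin.sum_univ_two, Matrix.one_apply, hadef] <;> ring
    have hJJ : J * J = b • (1 : Matrix (Fin 2) (Fin 2) F) := by
      ext i j
      fin_cases i <;> fin_cases j <;>
        simp [J, Matrix.mul_apply, Fin.sum_univ_two, Matrix.one_apply]
    have hJI : J * I = -(I * J) := by
      ext i j
      fin_cases i <;> fin_cases j <;>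
        simp [I, J, Matrix.mul_apply, Fin.sum_univ_two] <;> ring
    let Q : QuaternionAlgebra.Basis (Matrix (Fin 2) (Fin 2) F) a 0 b :=
      { i := I, j := J, k := I * J,
        i_mul_i := by rw [hII, zero_smul, add_zero], j_mul_j := hJJ, i_mul_j := rfl,
        j_mul_i := by rw [hJI, zero_smul, zero_sub] }
    let φ := Q.liftHom
    have hinj : Function.Injective φ := by
      rw [injective_iff_map_eq_zero]
      intro q hq0
      obtain ⟨w, p, r, s⟩ := q
      have h00 := congrFun (congrFun hq0 0) 0
      have h01 := congrFun (congrFun hq0 0) 1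
      have h10 := congrFun (congrFun hq0 1) 0
      have h11 := congrFun (congrFun hq0 1) 1
      simp [φ, Q, QuaternionAlgebra.Basis.liftHom, QuaternionAlgebra.Basis.lift, I, J,
        Matrix.mul_apply, Fin.sum_univ_two, Matrix.algebraMap_matrix_apply] at h00 h01 h10 h11
      have hw : w = 0 := by
        have h : 2 * w = 0 := by linear_combination h00 + h11
        exact (mul_eq_zero.mp h).resolve_left h2
      have hr : r = 0 := by
        have h : (2 * b) * r = 0 := by linear_combination b * h01 + h10
        exact (mul_eq_zero.mp h).resolve_left (mul_ne_zero h2 hb)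
      have hp : p = 0 := by
        have h : (2 * a) * p = 0 := by
          rw [hadef]; linear_combination x * h00 - x * h11 - y * b * h01 + y * h10
        exact (mul_eq_zero.mp h).resolve_left (mul_ne_zero h2 ha)
      have hs : s = 0 := by
        have h : (2 * b * a) * s = 0 := by
          rw [hadef]; linear_combination x * b * h01 - x * h10 - y * b * h00 + y * b * h11
        exact (mul_eq_zero.mp h).resolve_left (mul_ne_zero (mul_ne_zero h2 hb) ha)
      ext <;> simp [hw, hp, hr, hs]
    have hsurj : Function.Surjective φ := by
      have hfr : Module.finrank F ℍ[F,a,b] = Module.finrank F (Matrix (Fin 2) (Fin 2) F) := by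
        rw [QuaternionAlgebra.finrank_eq_four, Module.finrank_matrix]
        simp
      exact (LinearMap.injective_iff_surjective_of_finrank_eq_finrank
        (f := φ.toLinearMap) hfr).mp hinj
    exact ⟨AlgEquiv.ofBijective φ ⟨hinj, hsurj⟩⟩
end

section
/- Let p and q be odd primes with p ≡ q ≡ 3 (mod 4) and q not a quadratic residue modulo p. Then the reduced discriminant of the rational quaternion algebra H_ℚ(p,q) equals 2p; in particular, H_ℚ(p,q) is a division algebra. -/
open Quaternion

/-- The rational quaternion algebra `H_ℚ(a,b)` ramifies at the rational prime `v`
if its base change to `ℚ_v` is a division algebra. -/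
def RatQuatRamifiedAt (a b : ℚ) (v : ℕ) [Fact v.Prime] : Prop :=
  ∀ x : ℍ[ℚ_[v], (a : ℚ_[v]), (b : ℚ_[v])], x ≠ 0 → IsUnit x

section QNorm
variable {K : Type*} [Field K] {c₁ c₂ : K}

def qnorm (c₁ c₂ : K) (x : ℍ[K,c₁,c₂]) : K :=
  x.re^2 - c₁*x.imI^2 - c₂*x.imJ^2 + c₁*c₂*x.imK^2

lemma qnorm_mul_star (x : ℍ[K,c₁,c₂]) :
    x * star x = ((qnorm c₁ c₂ x : K) : ℍ[K,c₁,c₂]) := by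
  rw [QuaternionAlgebra.mul_star_eq_coe]
  congr 1
  simp only [QuaternionAlgebra.re_mul, QuaternionAlgebra.re_star, QuaternionAlgebra.imI_star,
    QuaternionAlgebra.imJ_star, QuaternionAlgebra.imK_star, qnorm]
  ring

lemma qnorm_star_mul (x : ℍ[K,c₁,c₂]) :
    star x * x = ((qnorm c₁ c₂ x : K) : ℍ[K,c₁,c₂]) := by
  rw [star_comm_self', qnorm_mul_star]

lemma isUnit_of_qnorm_ne_zero {x : ℍ[K,c₁,c₂]} (h : qnorm c₁ c₂ x ≠ 0) : IsUnit x := by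
  rw [isUnit_iff_exists]
  refine ⟨((qnorm c₁ c₂ x)⁻¹ : K) • star x, ?_, ?_⟩
  · rw [mul_smul_comm, qnorm_mul_star, QuaternionAlgebra.smul_coe, inv_mul_cancel₀ h,
      QuaternionAlgebra.coe_one]
  · rw [smul_mul_assoc, qnorm_star_mul, QuaternionAlgebra.smul_coe, inv_mul_cancel₀ h,
      QuaternionAlgebra.coe_one]

lemma not_isUnit_of_qnorm_eq_zero {x : ℍ[K,c₁,c₂]} (hx : x ≠ 0) (h : qnorm c₁ c₂ x = 0) :
    ¬ IsUnit x := by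
  intro hu
  have h0 : x * star x = x * 0 := by
    rw [mul_zero, qnorm_mul_star, h, QuaternionAlgebra.coe_zero]
  exact hx (by simpa using star_eq_zero.mp (hu.mul_left_cancel h0))

end QNorm

variable {v : ℕ} [Fact v.Prime]

lemma aux_scale_one {z : ℚ_[v]} (hz : z ≠ 0) :
    ∃ e : ℚ_[v], e ≠ 0 ∧ ‖e * z‖ = 1 ∧ ∀ w : ℚ_[v], ‖w‖ ≤ ‖z‖ → ‖e * w‖ ≤ 1 := by
  have hv1 : (1 : ℝ) < (v : ℝ) := by exact_mod_cast (Fact.out : v.Prime).one_lt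
  have hv0 : (0 : ℝ) < (v : ℝ) := by linarith
  refine ⟨(v : ℚ_[v]) ^ (-z.valuation), ?_, ?_, ?_⟩
  · exact zpow_ne_zero _ (by exact_mod_cast (Fact.out : v.Prime).ne_zero)
  · rw [norm_mul, Padic.norm_p_zpow, Padic.norm_eq_zpow_neg_valuation hz, neg_neg,
      ← zpow_add₀ (ne_of_gt hv0)]
    simp
  · intro w hw
    rw [norm_mul, Padic.norm_p_zpow, neg_neg]
    calc (v:ℝ) ^ z.valuation * ‖w‖ ≤ (v:ℝ) ^ z.valuation * (v:ℝ) ^ (-z.valuation) := by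
          exact mul_le_mul_of_nonneg_left (hw.trans_eq (Padic.norm_eq_zpow_neg_valuation hz))
            (zpow_pos hv0 _).le
      _ = 1 := by rw [← zpow_add₀ (ne_of_gt hv0)]; simp

/-- Scale a nonzero 4-tuple into `ℤ_[v]` with at least one coordinate of norm 1. -/
lemma scale_tuple (a b c d : ℚ_[v]) (h : ¬(a = 0 ∧ b = 0 ∧ c = 0 ∧ d = 0)) :
    ∃ (e : ℚ_[v]) (A B C D : ℤ_[v]), e ≠ 0 ∧
      (A : ℚ_[v]) = e * a ∧ (B : ℚ_[v]) = e * b ∧ (C : ℚ_[v]) = e * c ∧ (D : ℚ_[v]) = e * d ∧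
      (‖A‖ = 1 ∨ ‖B‖ = 1 ∨ ‖C‖ = 1 ∨ ‖D‖ = 1) := by
  obtain ⟨z, hz, hza, hzb, hzc, hzd, hmem⟩ :
      ∃ z : ℚ_[v], z ≠ 0 ∧ ‖a‖ ≤ ‖z‖ ∧ ‖b‖ ≤ ‖z‖ ∧ ‖c‖ ≤ ‖z‖ ∧ ‖d‖ ≤ ‖z‖ ∧
        (z = a ∨ z = b ∨ z = c ∨ z = d) := by
    have hM : ∃ M : ℝ, M = max (max ‖a‖ ‖b‖) (max ‖c‖ ‖d‖) := ⟨_, rfl⟩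
    obtain ⟨M, hM⟩ := hM
    have ha : ‖a‖ ≤ M := hM ▸ le_trans (le_max_left _ _) (le_max_left _ _)
    have hb : ‖b‖ ≤ M := hM ▸ le_trans (le_max_right _ _) (le_max_left _ _)
    have hc : ‖c‖ ≤ M := hM ▸ le_trans (le_max_left _ _) (le_max_right _ _)
    have hd : ‖d‖ ≤ M := hM ▸ le_trans (le_max_right _ _) (le_max_right _ _)
    have hMpos : 0 < M := by
      by_contra hM0
      push_neg at hM0
      exact h ⟨norm_le_zero_iff.1 (ha.trans hM0), norm_le_zero_iff.1 (hb.trans hM0),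
        norm_le_zero_iff.1 (hc.trans hM0), norm_le_zero_iff.1 (hd.trans hM0)⟩
    rcases max_choice (max ‖a‖ ‖b‖) (max ‖c‖ ‖d‖) with h1 | h1 <;>
      [rcases max_choice ‖a‖ ‖b‖ with h2 | h2; rcases max_choice ‖c‖ ‖d‖ with h2 | h2]
    · have hMz : M ≤ ‖a‖ := le_of_eq (hM.trans (h1.trans h2))
      exact ⟨a, norm_pos_iff.mp (hMpos.trans_le hMz), le_refl _, hb.trans hMz, hc.trans hMz,
        hd.trans hMz, Or.inl rfl⟩
    · have hMz : M ≤ ‖b‖ := le_of_eq (hM.trans (h1.trans h2))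
      exact ⟨b, norm_pos_iff.mp (hMpos.trans_le hMz), ha.trans hMz, le_refl _, hc.trans hMz,
        hd.trans hMz, Or.inr (Or.inl rfl)⟩
    · have hMz : M ≤ ‖c‖ := le_of_eq (hM.trans (h1.trans h2))
      exact ⟨c, norm_pos_iff.mp (hMpos.trans_le hMz), ha.trans hMz, hb.trans hMz, le_refl _,
        hd.trans hMz, Or.inr (Or.inr (Or.inl rfl))⟩
    · have hMz : M ≤ ‖d‖ := le_of_eq (hM.trans (h1.trans h2))
      exact ⟨d, norm_pos_iff.mp (hMpos.trans_le hMz), ha.trans hMz, hb.trans hMz, hc.trans hMz,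
        le_refl _, Or.inr (Or.inr (Or.inr rfl))⟩
  obtain ⟨e, he0, hez, hle⟩ := aux_scale_one hz
  refine ⟨e, ⟨e * a, hle a hza⟩, ⟨e * b, hle b hzb⟩, ⟨e * c, hle c hzc⟩, ⟨e * d, hle d hzd⟩,
    he0, rfl, rfl, rfl, rfl, ?_⟩
  rcases hmem with rfl | rfl | rfl | rfl
  · exact Or.inl hez
  · exact Or.inr (Or.inl hez)
  · exact Or.inr (Or.inr (Or.inl hez))
  · exact Or.inr (Or.inr (Or.inr hez))
open Quaternion

set_option synthInstance.maxSize 4000 in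
set_option synthInstance.maxHeartbeats 1000000 in
set_option maxRecDepth 100000 in
set_option maxHeartbeats 8000000 in
private lemma zmod8_core (P Q : ZMod 8) (hP : P = 3 ∨ P = 7) (hQ : Q = 3 ∨ Q = 7) :
    ∀ A B C D : ZMod 8,
    ((A = 1 ∨ A = 3 ∨ A = 5 ∨ A = 7) ∨ (B = 1 ∨ B = 3 ∨ B = 5 ∨ B = 7) ∨
     (C = 1 ∨ C = 3 ∨ C = 5 ∨ C = 7) ∨ (D = 1 ∨ D = 3 ∨ D = 5 ∨ D = 7)) →
    A^2 - P*B^2 - Q*C^2 + P*Q*D^2 ≠ 0 := by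
  rcases hP with rfl | rfl <;> rcases hQ with rfl | rfl <;> decide

private lemma zmod8_unit (x : ZMod 8) (h : IsUnit x) :
    x = 1 ∨ x = 3 ∨ x = 5 ∨ x = 7 := by
  obtain ⟨u, rfl⟩ := h
  have hu : (u : ZMod 8) * (u⁻¹ : Units (ZMod 8)) = 1 := u.mul_inv
  revert hu
  generalize ((u⁻¹ : Units (ZMod 8)) : ZMod 8) = y
  revert y
  generalize ((u : Units (ZMod 8)) : ZMod 8) = x
  revert x
  decide

noncomputable def toZMod8 : ℤ_[2] →+* ZMod 8 :=
  (ZMod.castHom (by norm_num : (8:ℕ) ∣ 2^3) (ZMod 8)).comp (PadicInt.toZModPow 3)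

set_option maxHeartbeats 1000000 in
lemma aniso_two (p q : ℕ) (hp4 : p % 4 = 3) (hq4 : q % 4 = 3)
    {a b c d : ℚ_[2]} (h : a^2 - p*b^2 - q*c^2 + (p*q)*d^2 = 0) :
    a = 0 ∧ b = 0 ∧ c = 0 ∧ d = 0 := by
  by_contra hne
  obtain ⟨e, A, B, C, D, he, hA, hB, hC, hD, hmax⟩ := scale_tuple a b c d hne
  have hZeq : A^2 - p*B^2 - q*C^2 + (p*q)*D^2 = 0 := by
    have h2 : ((A^2 - p*B^2 - q*C^2 + (p*q)*D^2 : ℤ_[2]) : ℚ_[2])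
        = e^2 * (a^2 - p*b^2 - q*c^2 + (p*q)*d^2) := by
      push_cast [hA, hB, hC, hD]; ring
    rw [h, mul_zero] at h2
    exact PadicInt.coe_eq_zero.mp h2
  have hφeq : (toZMod8 A)^2 - (p : ZMod 8)*(toZMod8 B)^2 - (q : ZMod 8)*(toZMod8 C)^2
      + ((p : ZMod 8)*(q : ZMod 8))*(toZMod8 D)^2 = 0 := by
    have h3 := congrArg toZMod8 hZeq
    push_cast [map_add, map_sub, map_mul, map_pow, map_natCast, map_zero] at h3
    exact_mod_cast h3
  have hp8 : (p : ZMod 8) = 3 ∨ (p : ZMod 8) = 7 := by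
    have h8 : p % 8 = 3 ∨ p % 8 = 7 := by omega
    rcases h8 with h8 | h8 <;> [left; right] <;>
      rw [← ZMod.natCast_mod p 8, h8] <;> norm_num
  have hq8 : (q : ZMod 8) = 3 ∨ (q : ZMod 8) = 7 := by
    have h8 : q % 8 = 3 ∨ q % 8 = 7 := by omega
    rcases h8 with h8 | h8 <;> [left; right] <;>
      rw [← ZMod.natCast_mod q 8, h8] <;> norm_num
  have hunit : ∀ z : ℤ_[2], ‖z‖ = 1 → toZMod8 z = 1 ∨ toZMod8 z = 3 ∨ toZMod8 z = 5 ∨ toZMod8 z = 7 := fun z hz =>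
    zmod8_unit _ ((PadicInt.isUnit_iff.mpr hz).map toZMod8)
  refine zmod8_core (p : ZMod 8) (q : ZMod 8) hp8 hq8 (toZMod8 A) (toZMod8 B) (toZMod8 C) (toZMod8 D) ?_ hφeq
  rcases hmax with h1 | h1 | h1 | h1
  · exact Or.inl (hunit _ h1)
  · exact Or.inr (Or.inl (hunit _ h1))
  · exact Or.inr (Or.inr (Or.inl (hunit _ h1)))
  · exact Or.inr (Or.inr (Or.inr (hunit _ h1)))

section OddAniso
variable {l : ℕ} [Fact l.Prime]

lemma toZMod_eq_zero_iff' (z : ℤ_[l]) : PadicInt.toZMod z = 0 ↔ ‖z‖ < 1 := by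
  rw [← RingHom.mem_ker, PadicInt.ker_toZMod, IsLocalRing.mem_maximalIdeal,
    PadicInt.mem_nonunits]

lemma unit_comb_norm_one {r : ℤ_[l]} (hr : ‖r‖ = 1) (hns : ¬ IsSquare (PadicInt.toZMod r))
    {u w : ℤ_[l]} (hu : ‖u‖ = 1) (hw : ‖w‖ = 1) : ‖u^2 - r*w^2‖ = 1 := by
  rcases lt_or_eq_of_le (PadicInt.norm_le_one (u^2 - r*w^2)) with hlt | he
  · exfalso
    apply hns
    have h0 : PadicInt.toZMod (u^2 - r*w^2) = 0 := (toZMod_eq_zero_iff' _).mpr hlt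
    rw [map_sub, map_pow, map_mul, map_pow, sub_eq_zero] at h0
    have hwu : IsUnit (PadicInt.toZMod w) := (PadicInt.isUnit_iff.mpr hw).map _
    have hw0 : PadicInt.toZMod w ≠ 0 := hwu.ne_zero
    refine ⟨PadicInt.toZMod u * (PadicInt.toZMod w)⁻¹, ?_⟩
    field_simp
    linear_combination -h0
  · exact he

lemma binary_norm {r : ℤ_[l]} (hr : ‖r‖ = 1) (hns : ¬ IsSquare (PadicInt.toZMod r))
    {x y : ℤ_[l]} (hxy : ¬ (x = 0 ∧ y = 0)) : ∃ n : ℤ, ‖x^2 - r*y^2‖ = (l:ℝ) ^ (2*n) := by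
  have hl0 : (0:ℝ) < l := by exact_mod_cast (Fact.out : l.Prime).pos
  have sq_val : ∀ z : ℤ_[l], z ≠ 0 → ‖z‖^2 = (l:ℝ) ^ (2 * (-(z.valuation:ℤ))) := by
    intro z hz
    rw [PadicInt.norm_eq_zpow_neg_valuation hz, ← zpow_natCast ((l:ℝ) ^ (-(z.valuation:ℤ))), ← zpow_mul]
    congr 1
    omega
  by_cases hx : x = 0
  · have hy : y ≠ 0 := fun h => hxy ⟨hx, h⟩
    refine ⟨-(y.valuation), ?_⟩
    rw [hx, zero_pow two_ne_zero, zero_sub, norm_neg, norm_mul, hr, one_mul,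
      norm_pow, sq_val y hy]
  · by_cases hy : y = 0
    · refine ⟨-(x.valuation), ?_⟩
      rw [hy, zero_pow two_ne_zero, mul_zero, sub_zero, norm_pow, sq_val x hx]
    · have hxx : ‖x^2‖ = ‖x‖^2 := norm_pow x 2
      have hyy : ‖-(r*y^2)‖ = ‖y‖^2 := by
        rw [norm_neg, norm_mul, hr, one_mul, norm_pow]
      have h0x : (0:ℝ) ≤ ‖x‖ := norm_nonneg _
      have h0y : (0:ℝ) ≤ ‖y‖ := norm_nonneg _
      rcases lt_trichotomy ‖x‖ ‖y‖ with hc | hc | hc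
      · refine ⟨-(y.valuation), ?_⟩
        rw [sub_eq_add_neg, PadicInt.norm_add_eq_max_of_ne (by rw [hxx, hyy]; nlinarith),
          hxx, hyy, max_eq_right (by nlinarith), sq_val y hy]
      · have hval : x.valuation = y.valuation := by
          have hx' := PadicInt.norm_eq_zpow_neg_valuation hx
          have hy' := PadicInt.norm_eq_zpow_neg_valuation hy
          rw [hc] at hx'
          have h2 := hx'.symm.trans hy'
          have hl1 : (1:ℝ) < l := by exact_mod_cast (Fact.out : l.Prime).one_lt
          have := zpow_right_injective₀ hl0 (ne_of_gt hl1) h2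
          omega
        refine ⟨-(x.valuation), ?_⟩
        have hux := PadicInt.unitCoeff_spec hx
        have huy := PadicInt.unitCoeff_spec hy
        set u := PadicInt.unitCoeff hx with hu
        set w := PadicInt.unitCoeff hy with hw
        have hval' : y.valuation = x.valuation := by rw [hval]
        rw [hval'] at huy
        have hkv : (x.valuation : ℤ) = x.valuation := rfl
        obtain ⟨k, hk⟩ : ∃ k, x.valuation = k := ⟨_, rfl⟩
        rw [hk] at hux huy hkv
        have key : x^2 - r*y^2
            = ((u:ℤ_[l])^2 - r*(w:ℤ_[l])^2) * (l:ℤ_[l]) ^ (2 * k) := by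
          rw [hux, huy]
          ring
        rw [key, norm_mul,
          unit_comb_norm_one hr hns (PadicInt.norm_units u) (PadicInt.norm_units w), one_mul,
          norm_pow, PadicInt.norm_p, ← zpow_neg_one, ← zpow_natCast ((l:ℝ)^(-1:ℤ)),
          ← zpow_mul]
        congr 1
        omega
      · refine ⟨-(x.valuation), ?_⟩
        rw [sub_eq_add_neg, PadicInt.norm_add_eq_max_of_ne (by rw [hxx, hyy]; nlinarith),
          hxx, hyy, max_eq_left (by nlinarith), sq_val x hx]

lemma quad_aniso {r : ℤ_[l]} (hr : ‖r‖ = 1) (hns : ¬ IsSquare (PadicInt.toZMod r))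
    {X Y Z W : ℤ_[l]} (heq : X^2 - r*Y^2 = (l:ℤ_[l]) * (Z^2 - r*W^2)) :
    X = 0 ∧ Y = 0 ∧ Z = 0 ∧ W = 0 := by
  have hl0 : (0:ℝ) < l := by exact_mod_cast (Fact.out : l.Prime).pos
  have hl1 : (1:ℝ) < l := by exact_mod_cast (Fact.out : l.Prime).one_lt
  by_cases hZW : Z = 0 ∧ W = 0
  · have h0 : X^2 - r*Y^2 = 0 := by rw [heq, hZW.1, hZW.2]; ring
    by_cases hXY : X = 0 ∧ Y = 0
    · exact ⟨hXY.1, hXY.2, hZW.1, hZW.2⟩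
    · exfalso
      obtain ⟨n, hn⟩ := binary_norm hr hns hXY
      rw [h0, norm_zero] at hn
      exact (zpow_pos hl0 (2*n)).ne' hn.symm
  · exfalso
    obtain ⟨m, hm⟩ := binary_norm hr hns hZW
    have hXY : ¬ (X = 0 ∧ Y = 0) := by
      rintro ⟨rfl, rfl⟩
      have : (0:ℝ) = (l:ℝ)⁻¹ * (l:ℝ)^(2*m) := by
        simpa [norm_mul, PadicInt.norm_p, hm] using congrArg (‖·‖) heq
      exact (by positivity : (0:ℝ) < (l:ℝ)⁻¹ * (l:ℝ)^(2*m)).ne this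
    obtain ⟨n, hn⟩ := binary_norm hr hns hXY
    have hnorm : (l:ℝ)^(2*n) = (l:ℝ)⁻¹ * (l:ℝ)^(2*m) := by
      rw [← hn, ← hm, heq, norm_mul, PadicInt.norm_p]
    rw [← zpow_neg_one, ← zpow_add₀ (ne_of_gt hl0)] at hnorm
    have := zpow_right_injective₀ hl0 (ne_of_gt hl1) hnorm
    omega

end OddAniso

lemma aniso_p (p q : ℕ) [Fact p.Prime] [Fact q.Prime] (hp4 : p % 4 = 3)
    (hres : legendreSym p q ≠ 1) {a b c d : ℚ_[p]}
    (h : a^2 - p*b^2 - q*c^2 + (p*q)*d^2 = 0) :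
    a = 0 ∧ b = 0 ∧ c = 0 ∧ d = 0 := by
  have hpp : p.Prime := Fact.out
  by_contra hne
  obtain ⟨e, A, B, C, D, he, hA, hB, hC, hD, hmax⟩ := scale_tuple a b c d hne
  have hZeq : A^2 - p*B^2 - q*C^2 + (p*q)*D^2 = 0 := by
    have h2 : ((A^2 - p*B^2 - q*C^2 + (p*q)*D^2 : ℤ_[p]) : ℚ_[p])
        = e^2 * (a^2 - p*b^2 - q*c^2 + (p*q)*d^2) := by
      push_cast [hA, hB, hC, hD]; ring
    rw [h, mul_zero] at h2
    exact PadicInt.coe_eq_zero.mp h2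
  have hfalse : A = 0 ∧ B = 0 ∧ C = 0 ∧ D = 0 := by
    by_cases hpq : q = p
    · subst hpq
      -- r = -1
      have hr : ‖(-1 : ℤ_[q])‖ = 1 := by rw [norm_neg, norm_one]
      have hns : ¬ IsSquare (PadicInt.toZMod (-1 : ℤ_[q])) := by
        rw [map_neg, map_one]
        rw [ZMod.exists_sq_eq_neg_one_iff]
        simp [hp4]
      have heq : A^2 - (-1 : ℤ_[q])*((q:ℤ_[q])*D)^2
          = (q:ℤ_[q]) * (B^2 - (-1 : ℤ_[q])*C^2) := by linear_combination hZeq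
      obtain ⟨h1, h2, h3, h4⟩ := quad_aniso hr hns heq
      have hq0 : (q:ℤ_[q]) ≠ 0 := Nat.cast_ne_zero.mpr hpp.ne_zero
      exact ⟨h1, h3, h4, (mul_eq_zero.mp h2).resolve_left hq0⟩
    · have hndvd : ¬ (p:ℤ) ∣ (q:ℤ) := by
        rw [Int.natCast_dvd_natCast]
        intro hdvd
        exact hpq ((Nat.prime_dvd_prime_iff_eq hpp Fact.out).mp hdvd).symm
      have hr : ‖(q : ℤ_[p])‖ = 1 := by
        refine le_antisymm (PadicInt.norm_le_one _) (not_lt.mp ?_)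
        intro hlt
        rw [show ((q:ℤ_[p])) = ((q:ℤ):ℤ_[p]) by push_cast; ring] at hlt
        exact hndvd ((PadicInt.norm_int_lt_one_iff_dvd _).mp hlt)
      have hq0 : ((q:ℤ) : ZMod p) ≠ 0 := by
        rw [Int.cast_natCast, Ne, ZMod.natCast_eq_zero_iff]
        exact fun hdvd => hpq ((Nat.prime_dvd_prime_iff_eq hpp Fact.out).mp hdvd).symm
      have hns : ¬ IsSquare (PadicInt.toZMod (q : ℤ_[p])) := by
        rw [map_natCast]
        intro hsq
        apply hres
        rw [legendreSym.eq_one_iff p hq0]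
        exact_mod_cast hsq
      have heq : A^2 - (q:ℤ_[p])*C^2 = (p:ℤ_[p]) * (B^2 - (q:ℤ_[p])*D^2) := by
        linear_combination hZeq
      obtain ⟨h1, h2, h3, h4⟩ := quad_aniso hr hns heq
      exact ⟨h1, h3, h2, h4⟩
  rcases hmax with h1 | h1 | h1 | h1 <;>
    [rw [hfalse.1] at h1; rw [hfalse.2.1] at h1; rw [hfalse.2.2.1] at h1;
     rw [hfalse.2.2.2] at h1] <;> simp at h1

section Split
variable {l : ℕ} [Fact l.Prime]

lemma norm_natCast_eq_one {n : ℕ} (h : ¬ l ∣ n) : ‖(n : ℤ_[l])‖ = 1 := by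
  refine le_antisymm (PadicInt.norm_le_one _) (not_lt.mp fun hlt => ?_)
  have h2 : ((n:ℤ) : ℤ_[l]) = (n : ℤ_[l]) := by push_cast; ring
  rw [← h2] at hlt
  exact h (Int.natCast_dvd_natCast.mp ((PadicInt.norm_int_lt_one_iff_dvd _).mp hlt))

lemma hensel_quad (hl2 : l ≠ 2) {r s t₀ : ℤ_[l]}
    (hr : ‖r‖ = 1) (ht : ‖t₀‖ = 1) (h : ‖r * t₀^2 + s‖ < 1) :
    ∃ t : ℤ_[l], r * t^2 + s = 0 := by
  have h2 : ‖(2:ℤ_[l])‖ = 1 := by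
    have : ¬ l ∣ 2 := fun hd =>
      hl2 ((Nat.prime_dvd_prime_iff_eq Fact.out Nat.prime_two).mp hd)
    simpa using norm_natCast_eq_one this
  set F : Polynomial ℤ_[l] := Polynomial.C r * Polynomial.X^2 + Polynomial.C s with hF
  have hev : ∀ z : ℤ_[l], F.eval z = r*z^2 + s := by intro z; simp [hF]
  have hdev : F.derivative.eval t₀ = 2*(r*t₀) := by
    simp [hF]
    ring
  have hnorm : ‖F.eval t₀‖ < ‖F.derivative.eval t₀‖^2 := by
    rw [hev, hdev, norm_mul, norm_mul, h2, hr, ht]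
    simpa using h
  obtain ⟨z, hz, -⟩ := hensels_lemma hnorm
  exact ⟨z, by rw [← hev z]; exact hz⟩

lemma lift_sol {p q : ℕ} (hl2 : l ≠ 2) (hlp : ¬ l ∣ p)
    (hsol : ∃ γ δ : ZMod l, (p:ZMod l)*γ^2 + (q:ZMod l)*δ^2 = 1) :
    ∃ T S : ℤ_[l], (p:ℤ_[l])*T^2 + (q:ℤ_[l])*S^2 = 1 := by
  obtain ⟨γ, δ, hγδ⟩ := hsol
  have hval : ∀ z : ZMod l, PadicInt.toZMod ((z.val : ℕ) : ℤ_[l]) = z := by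
    intro z
    rw [map_natCast, ZMod.natCast_zmod_val]
  have hunit : ∀ z : ZMod l, z ≠ 0 → ‖((z.val : ℕ) : ℤ_[l])‖ = 1 := by
    intro z hz
    refine le_antisymm (PadicInt.norm_le_one _) (not_lt.mp fun hlt => ?_)
    exact hz (by rw [← hval z]; exact (toZMod_eq_zero_iff' _).mpr hlt)
  by_cases hγ : γ = 0
  · -- q δ² = 1 in ZMod l
    have hδeq : (q:ZMod l)*δ^2 = 1 := by rw [hγ] at hγδ; simpa using hγδ
    have hδ : δ ≠ 0 := by rintro rfl; simp at hδeq
    have hq0 : (q : ZMod l) ≠ 0 := by rintro hq0; rw [hq0] at hδeq; simp at hδeq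
    have hlq : ¬ l ∣ q := fun hd => hq0 ((ZMod.natCast_eq_zero_iff q l).mpr hd)
    have hsmall : ‖(q:ℤ_[l]) * ((δ.val : ℕ) : ℤ_[l])^2 + (-1)‖ < 1 := by
      rw [← toZMod_eq_zero_iff']
      simp only [map_add, map_mul, map_pow, map_natCast, map_neg, map_one,
        ZMod.natCast_zmod_val]
      linear_combination hδeq
    obtain ⟨t, ht⟩ := hensel_quad hl2 (norm_natCast_eq_one hlq) (hunit δ hδ) hsmall
    exact ⟨0, t, by linear_combination ht⟩
  · have hsmall : ‖(p:ℤ_[l]) * ((γ.val : ℕ) : ℤ_[l])^2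
        + ((q:ℤ_[l]) * ((δ.val : ℕ) : ℤ_[l])^2 - 1)‖ < 1 := by
      rw [← toZMod_eq_zero_iff']
      simp only [map_add, map_sub, map_mul, map_pow, map_natCast, map_one,
        ZMod.natCast_zmod_val]
      linear_combination hγδ
    obtain ⟨t, ht⟩ := hensel_quad hl2 (norm_natCast_eq_one hlp) (hunit γ hγ) hsmall
    exact ⟨t, ((δ.val : ℕ) : ℤ_[l]), by linear_combination ht⟩

end Split

lemma zmod_sol_generic {l p q : ℕ} [Fact l.Prime] (hl2 : l ≠ 2) (hlp : ¬ l ∣ p) (hlq : ¬ l ∣ q) :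
    ∃ γ δ : ZMod l, (p:ZMod l)*γ^2 + (q:ZMod l)*δ^2 = 1 := by
  have hp0 : (p : ZMod l) ≠ 0 := fun h => hlp ((ZMod.natCast_eq_zero_iff p l).mp h)
  have hq0 : (q : ZMod l) ≠ 0 := fun h => hlq ((ZMod.natCast_eq_zero_iff q l).mp h)
  have hodd : Fintype.card (ZMod l) % 2 = 1 := by
    rw [ZMod.card]
    exact Nat.odd_iff.mp ((Fact.out : l.Prime).odd_of_ne_two hl2)
  obtain ⟨γ, δ, h⟩ := FiniteField.exists_root_sum_quadratic
    (f := Polynomial.C (p:ZMod l) * Polynomial.X^2 + Polynomial.C 0 * Polynomial.X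
      + Polynomial.C (-1))
    (g := Polynomial.C (q:ZMod l) * Polynomial.X^2 + Polynomial.C 0 * Polynomial.X
      + Polynomial.C 0)
    (Polynomial.degree_quadratic hp0) (Polynomial.degree_quadratic hq0) hodd
  refine ⟨γ, δ, ?_⟩
  simp only [Polynomial.eval_add, Polynomial.eval_mul, Polynomial.eval_pow, Polynomial.eval_C,
    Polynomial.eval_X, Polynomial.map_zero, zero_mul, add_zero] at h
  linear_combination h

lemma zmod_sol_at_q {p q : ℕ} [Fact p.Prime] [Fact q.Prime] (hp4 : p % 4 = 3) (hq4 : q % 4 = 3)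
    (hres : legendreSym p q ≠ 1) (hpq : p ≠ q) :
    ∃ γ δ : ZMod q, (p:ZMod q)*γ^2 + (q:ZMod q)*δ^2 = 1 := by
  have hpp : p.Prime := Fact.out
  have hqq : q.Prime := Fact.out
  have hq0 : ((q:ℤ) : ZMod p) ≠ 0 := by
    rw [Int.cast_natCast, Ne, ZMod.natCast_eq_zero_iff]
    exact fun hd => hpq ((Nat.prime_dvd_prime_iff_eq hpp hqq).mp hd)
  have hp0 : ((p:ℤ) : ZMod q) ≠ 0 := by
    rw [Int.cast_natCast, Ne, ZMod.natCast_eq_zero_iff]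
    exact fun hd => hpq (((Nat.prime_dvd_prime_iff_eq hqq hpp).mp hd)).symm
  have hqp1 : legendreSym q p = 1 := by
    have h1 := legendreSym.quadratic_reciprocity_three_mod_four hp4 hq4
    rcases legendreSym.eq_one_or_neg_one p hq0 with h | h
    · exact absurd h hres
    · rw [h1, h]; ring
  have hsq : IsSquare ((p:ℤ) : ZMod q) := (legendreSym.eq_one_iff q hp0).mp hqp1
  obtain ⟨s, hs⟩ := hsq
  have hp' : (p : ZMod q) = s * s := by exact_mod_cast hs
  have hs0 : s ≠ 0 := by
    rintro rfl
    rw [mul_zero] at hp'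
    exact hp0 (by exact_mod_cast hp')
  refine ⟨s⁻¹, 0, ?_⟩
  rw [ZMod.natCast_self, hp']
  field_simp
  ring

lemma not_ramified {p q v : ℕ} [Fact v.Prime]
    (hsol : ∃ T S : ℤ_[v], (p:ℤ_[v])*T^2 + (q:ℤ_[v])*S^2 = 1) :
    ¬ RatQuatRamifiedAt (p : ℚ) (q : ℚ) v := by
  obtain ⟨T, S, hTS⟩ := hsol
  intro hram
  set x : ℍ[ℚ_[v], ((p:ℚ) : ℚ_[v]), ((q:ℚ) : ℚ_[v])] := ⟨1, (T:ℚ_[v]), (S:ℚ_[v]), 0⟩ with hx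
  have hx0 : x ≠ 0 := by
    rw [hx]
    intro h0
    rw [QuaternionAlgebra.ext_iff] at h0
    exact one_ne_zero h0.1
  have hTS' : (p:ℚ_[v])*(T:ℚ_[v])^2 + (q:ℚ_[v])*(S:ℚ_[v])^2 = 1 := by
    have := congrArg (fun z : ℤ_[v] => (z : ℚ_[v])) hTS
    push_cast at this
    exact this
  have hnorm : qnorm ((p:ℚ) : ℚ_[v]) ((q:ℚ) : ℚ_[v]) x = 0 := by
    simp only [qnorm, hx]
    push_cast
    linear_combination -hTS'
  exact not_isUnit_of_qnorm_eq_zero hx0 hnorm (hram x hx0)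

lemma ramified_of_aniso {p q v : ℕ} [Fact v.Prime]
    (haniso : ∀ {a b c d : ℚ_[v]}, a^2 - p*b^2 - q*c^2 + (p*q)*d^2 = 0 →
      a = 0 ∧ b = 0 ∧ c = 0 ∧ d = 0) :
    RatQuatRamifiedAt (p : ℚ) (q : ℚ) v := by
  intro x hx
  apply isUnit_of_qnorm_ne_zero
  intro h0
  apply hx
  simp only [qnorm] at h0
  have heq : x.re^2 - (p:ℚ_[v])*x.imI^2 - (q:ℚ_[v])*x.imJ^2 + (p:ℚ_[v])*(q:ℚ_[v])*x.imK^2 = 0 := by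
    push_cast at h0 ⊢
    linear_combination h0
  obtain ⟨h1, h2, h3, h4⟩ := haniso heq
  ext <;> simp [h1, h2, h3, h4]

/-- for odd primes `p ≡ q ≡ 3 (mod 4)` with `q` not a quadratic residue
mod `p`, the reduced discriminant of `H_ℚ(p,q)` is `2p` (the ramified primes are
exactly `2` and `p`); in particular `H_ℚ(p,q)` is a division algebra. -/
theorem discriminant_eq_two_mul_p_of_three_mod_four
    (p q : ℕ) [Fact p.Prime] [Fact q.Prime] (hp4 : p % 4 = 3) (hq4 : q % 4 = 3)
    (hres : legendreSym p q ≠ 1) :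
    (∀ (v : ℕ) [Fact v.Prime],
        (RatQuatRamifiedAt (p : ℚ) (q : ℚ) v ↔ v = 2 ∨ v = p)) ∧
      ∀ x : ℍ[ℚ, (p : ℚ), (q : ℚ)], x ≠ 0 → IsUnit x := by
  have hpp : p.Prime := Fact.out
  have hqq : q.Prime := Fact.out
  have main2 : RatQuatRamifiedAt (p : ℚ) (q : ℚ) 2 :=
    ramified_of_aniso (fun {a b c d} h => aniso_two p q hp4 hq4 h)
  have mainp : RatQuatRamifiedAt (p : ℚ) (q : ℚ) p :=
    ramified_of_aniso (fun {a b c d} h => aniso_p p q hp4 hres h)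
  refine ⟨?_, ?_⟩
  · intro v hv
    constructor
    · intro hram
      by_contra hv2p
      push_neg at hv2p
      obtain ⟨hv2, hvp⟩ := hv2p
      have hvprime : v.Prime := Fact.out
      have hvdp : ¬ v ∣ p := fun hd => hvp ((Nat.prime_dvd_prime_iff_eq hvprime hpp).mp hd)
      by_cases hvq : v = q
      · subst hvq
        have hpv : p ≠ v := fun h => hvp h.symm
        exact (not_ramified (lift_sol hv2 hvdp (zmod_sol_at_q hp4 hq4 hres hpv))) hram
      · have hvdq : ¬ v ∣ q := fun hd => hvq ((Nat.prime_dvd_prime_iff_eq hvprime hqq).mp hd)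
        exact (not_ramified (lift_sol hv2 hvdp (zmod_sol_generic hv2 hvdp hvdq))) hram
    · rintro (rfl | rfl)
      · exact main2
      · exact mainp
  · intro x hx
    apply isUnit_of_qnorm_ne_zero
    intro h0
    apply hx
    simp only [qnorm] at h0
    have h2 := congrArg (fun t : ℚ => (t : ℚ_[2])) h0
    push_cast at h2
    obtain ⟨h1', h2', h3', h4'⟩ := aniso_two p q hp4 hq4 h2
    have hinj : Function.Injective (fun t : ℚ => (t : ℚ_[2])) := Rat.cast_injective
    ext
    · exact hinj (by simpa using h1')
    · exact hinj (by simpa using h2')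
    · exact hinj (by simpa using h3')
    · exact hinj (by simpa using h4')
end

section
/- Let p and q be distinct odd primes such that p ≡ 1 (mod 4) or q ≡ 1 (mod 4), and such that p is not a quadratic residue modulo q. Then the reduced discriminant of H_ℚ(p,q) equals pq; in particular H_ℚ(p,q) is a division algebra. -/
open Quaternion PadicInt Polynomial

namespace Stmt7Aux

/-! ### Quaternion algebra norm form -/

variable {K : Type*} [Field K] {a b : K}

def qnorm (x : ℍ[K,a,b]) : K :=
  x.re^2 - a * x.imI^2 - b * x.imJ^2 + a*b * x.imK^2

theorem mul_star_self' (x : ℍ[K,a,b]) :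
    x * star x = (⟨qnorm x, 0, 0, 0⟩ : ℍ[K,a,b]) := by
  ext <;> simp [qnorm] <;> ring

theorem star_mul_self' (x : ℍ[K,a,b]) :
    star x * x = (⟨qnorm x, 0, 0, 0⟩ : ℍ[K,a,b]) := by
  ext <;> simp [qnorm] <;> ring

theorem isUnit_of_qnorm_ne (x : ℍ[K,a,b]) (h : qnorm x ≠ 0) : IsUnit x := by
  refine ⟨⟨x, (qnorm x)⁻¹ • star x, ?_, ?_⟩, rfl⟩
  · rw [mul_smul_comm, mul_star_self']
    ext <;> simp <;> field_simp
  · rw [smul_mul_assoc, star_mul_self']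
    ext <;> simp <;> field_simp

theorem not_isUnit_of_qnorm_eq (x : ℍ[K,a,b]) (hx : x ≠ 0) (h : qnorm x = 0) :
    ¬ IsUnit x := by
  intro hu
  have h0 : x * star x = 0 := by rw [mul_star_self', h]; ext <;> simp
  have : star x = 0 := by
    obtain ⟨u, rfl⟩ := hu
    simpa using congrArg (fun y => (↑u⁻¹ : ℍ[K,a,b]) * y) h0
  exact hx (by simpa using congrArg star this)

theorem division_iff :
    (∀ x : ℍ[K,a,b], x ≠ 0 → IsUnit x) ↔ (∀ x : ℍ[K,a,b], x ≠ 0 → qnorm x ≠ 0) := by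
  constructor
  · intro H x hx hq
    exact not_isUnit_of_qnorm_eq x hx hq (H x hx)
  · intro H x hx
    exact isUnit_of_qnorm_ne x (H x hx)

/-! ### p-adic preliminaries -/

variable {v : ℕ} [hv : Fact v.Prime]

theorem toZMod_eq_zero_iff (x : ℤ_[v]) : toZMod x = 0 ↔ ‖x‖ < 1 := by
  rw [← RingHom.mem_ker, ker_toZMod, IsLocalRing.mem_maximalIdeal, mem_nonunits]

theorem norm_eq_one_iff_toZMod_ne (x : ℤ_[v]) : ‖x‖ = 1 ↔ toZMod x ≠ 0 := by
  rw [ne_eq, toZMod_eq_zero_iff]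
  constructor
  · intro h; rw [h]; norm_num
  · intro h
    rcases lt_or_eq_of_le (x.norm_le_one) with h' | h'
    · exact absurd h' h
    · exact h'

theorem natCast_two_ne (hv2 : v ≠ 2) : ((2:ℕ) : ZMod v) ≠ 0 := by
  rw [Ne, ZMod.natCast_eq_zero_iff]
  intro h
  exact hv2 ((Nat.prime_dvd_prime_iff_eq hv.out Nat.prime_two).mp h)

theorem isSquare_of_toZMod_isSquare (hv2 : v ≠ 2) (u : ℤ_[v]) (hu : ‖u‖ = 1)
    (h : IsSquare (toZMod u)) : IsSquare u := by
  obtain ⟨r, hr⟩ := h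
  have hr0 : r ≠ 0 := by
    intro h0; rw [h0, mul_zero] at hr
    exact (norm_eq_one_iff_toZMod_ne u).mp hu hr
  set a : ℤ_[v] := (r.val : ℤ_[v]) with ha
  have hta : toZMod a = r := by
    rw [ha, map_natCast, ZMod.natCast_rightInverse r]
  set F : Polynomial ℤ_[v] := Polynomial.X ^ 2 - Polynomial.C u with hF
  have hFa : toZMod (F.eval a) = 0 := by
    simp [hF, hta, ← hr, sq]
  have hF'a : F.derivative.eval a = 2 * a := by
    simp [hF]; exact Or.inl one_add_one_eq_two
  have h2 : ‖(2 : ℤ_[v])‖ = 1 := by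
    rw [norm_eq_one_iff_toZMod_ne, map_ofNat]
    exact_mod_cast natCast_two_ne hv2
  have hna : ‖a‖ = 1 := by
    rw [norm_eq_one_iff_toZMod_ne, hta]; exact hr0
  have hlt : ‖F.eval a‖ < ‖F.derivative.eval a‖ ^ 2 := by
    rw [hF'a, norm_mul, h2, hna, one_mul, one_pow]
    refine lt_of_le_of_ne (F.eval a).norm_le_one ?_
    intro hc
    exact (norm_eq_one_iff_toZMod_ne _).mp hc hFa
  obtain ⟨z, hz, -⟩ := hensels_lemma hlt
  refine ⟨z, ?_⟩
  have : z ^ 2 - u = 0 := by simpa [hF] using hz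
  rw [← sq]; exact (sub_eq_zero.mp this).symm

/-! ### the norm of `x² - c y²` for `c` a non-residue unit -/

theorem norm_sq_sub_mul_sq (c : ℚ_[v]) (hc : ‖c‖ = 1)
    (hns : ∀ r : ℚ_[v], ‖r‖ = 1 → ‖r ^ 2 - c‖ = 1) (x y : ℚ_[v]) :
    ‖x ^ 2 - c * y ^ 2‖ = max ‖x‖ ‖y‖ ^ 2 := by
  rcases eq_or_ne ‖x‖ ‖y‖ with heq | hne
  · rcases eq_or_ne y 0 with rfl | hy
    · have hx : x = 0 := by rwa [norm_zero, norm_eq_zero] at heq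
      simp [hx]
    · have hxy : ‖x / y‖ = 1 := by
        have hy' : ‖y‖ ≠ 0 := fun h => hy (norm_eq_zero.mp h)
        have hx' : ‖x‖ ≠ 0 := by rw [heq]; exact hy'
        rw [norm_div, ← heq, div_self hx']
      have key := hns (x / y) hxy
      have : x ^ 2 - c * y ^ 2 = y ^ 2 * ((x / y) ^ 2 - c) := by
        field_simp
      rw [this, _root_.norm_mul, key, mul_one, _root_.norm_pow, heq, max_self]
  · have h1 : ‖x ^ 2‖ ≠ ‖c * y ^ 2‖ := by
      rw [_root_.norm_pow, _root_.norm_mul, hc, one_mul, _root_.norm_pow]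
      intro h
      refine hne (le_antisymm ?_ ?_) <;> nlinarith [norm_nonneg x, norm_nonneg y]
    rw [sub_eq_add_neg, Padic.add_eq_max_of_ne (by simpa using h1)]
    rw [norm_neg, _root_.norm_pow, _root_.norm_mul, hc, one_mul, _root_.norm_pow]
    rcases le_total ‖x‖ ‖y‖ with h | h
    · rw [max_eq_right h, max_eq_right (by nlinarith [norm_nonneg x, norm_nonneg y])]
    · rw [max_eq_left h, max_eq_left (by nlinarith [norm_nonneg x, norm_nonneg y])]

theorem anisotropic_aux (c π : ℚ_[v]) (hc : ‖c‖ = 1)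
    (hns : ∀ r : ℚ_[v], ‖r‖ = 1 → ‖r ^ 2 - c‖ = 1) (hπ : ‖π‖ = (v : ℝ)⁻¹)
    (t z u w : ℚ_[v]) (heq : t ^ 2 - c * z ^ 2 = π * (u ^ 2 - c * w ^ 2)) :
    t = 0 ∧ z = 0 ∧ u = 0 ∧ w = 0 := by
  have hv0 : (0:ℝ) < (v:ℝ) := by exact_mod_cast hv.out.pos
  have hπ0 : π ≠ 0 := by
    intro h; rw [h, norm_zero] at hπ
    exact (inv_pos.mpr hv0).ne' hπ.symm
  have hM : max ‖t‖ ‖z‖ ^ 2 = (v:ℝ)⁻¹ * max ‖u‖ ‖w‖ ^ 2 := by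
    rw [← norm_sq_sub_mul_sq c hc hns t z, heq, _root_.norm_mul, hπ,
      norm_sq_sub_mul_sq c hc hns u w]
  rcases eq_or_ne (max ‖t‖ ‖z‖) 0 with h1 | h1
  · have ht : t = 0 := by
      have := le_max_left ‖t‖ ‖z‖; rw [h1] at this
      exact norm_eq_zero.mp (le_antisymm this (norm_nonneg t))
    have hz : z = 0 := by
      have := le_max_right ‖t‖ ‖z‖; rw [h1] at this
      exact norm_eq_zero.mp (le_antisymm this (norm_nonneg z))
    have h2 : u ^ 2 - c * w ^ 2 = 0 := by
      have : π * (u ^ 2 - c * w ^ 2) = 0 := by rw [← heq, ht, hz]; ring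
      exact (mul_eq_zero.mp this).resolve_left hπ0
    have h3 : max ‖u‖ ‖w‖ ^ 2 = 0 := by
      rw [← norm_sq_sub_mul_sq c hc hns u w, h2, norm_zero]
    have h4 : max ‖u‖ ‖w‖ = 0 := by nlinarith [le_max_left ‖u‖ ‖w‖, norm_nonneg u]
    refine ⟨ht, hz, ?_, ?_⟩
    · have := le_max_left ‖u‖ ‖w‖; rw [h4] at this
      exact norm_eq_zero.mp (le_antisymm this (norm_nonneg u))
    · have := le_max_right ‖u‖ ‖w‖; rw [h4] at this
      exact norm_eq_zero.mp (le_antisymm this (norm_nonneg w))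
  · exfalso
    have h2 : max ‖u‖ ‖w‖ ≠ 0 := by
      intro h; rw [h] at hM
      have : max ‖t‖ ‖z‖ ^ 2 = 0 := by rw [hM]; ring
      exact h1 (pow_eq_zero_iff (n := 2) (by norm_num) |>.mp this)
    have hv1 : (1:ℝ) < (v:ℝ) := by
      exact_mod_cast hv.out.one_lt
    obtain ⟨m, hm⟩ : ∃ m : ℤ, max ‖t‖ ‖z‖ = (v:ℝ) ^ m := by
      rcases max_choice ‖t‖ ‖z‖ with h | h <;> rw [h] at h1 ⊢
      · exact ⟨-(t.valuation), Padic.norm_eq_zpow_neg_valuation (by simpa using h1)⟩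
      · exact ⟨-(z.valuation), Padic.norm_eq_zpow_neg_valuation (by simpa using h1)⟩
    obtain ⟨n, hn⟩ : ∃ n : ℤ, max ‖u‖ ‖w‖ = (v:ℝ) ^ n := by
      rcases max_choice ‖u‖ ‖w‖ with h | h <;> rw [h] at h2 ⊢
      · exact ⟨-(u.valuation), Padic.norm_eq_zpow_neg_valuation (by simpa using h2)⟩
      · exact ⟨-(w.valuation), Padic.norm_eq_zpow_neg_valuation (by simpa using h2)⟩
    rw [hm, hn, ← zpow_natCast ((v:ℝ)^m) 2, ← zpow_mul, ← zpow_natCast ((v:ℝ)^n) 2, ← zpow_mul,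
      ← zpow_neg_one, ← zpow_add₀ (ne_of_gt hv0)] at hM
    have := zpow_right_injective₀ hv0 (ne_of_gt hv1) hM
    omega

/-! ### residue hypotheses -/

theorem norm_natCast_eq_one (n : ℕ) (hn0 : (n : ZMod v) ≠ 0) : ‖(n : ℚ_[v])‖ = 1 := by
  have : ‖((n : ℤ_[v]) : ℚ_[v])‖ = 1 := by
    rw [← PadicInt.norm_def, norm_eq_one_iff_toZMod_ne, map_natCast]
    exact hn0
  simpa using this

theorem hns_of_nonresidue (n : ℕ) (hn : ¬ IsSquare ((n : ZMod v))) :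
    ∀ r : ℚ_[v], ‖r‖ = 1 → ‖r ^ 2 - (n : ℚ_[v])‖ = 1 := by
  intro r hr
  set r' : ℤ_[v] := ⟨r, le_of_eq hr⟩ with hr'
  have hcoe : r ^ 2 - (n : ℚ_[v]) = ((r' ^ 2 - (n : ℤ_[v]) : ℤ_[v]) : ℚ_[v]) := by
    push_cast [hr']
    rfl
  rw [hcoe, ← PadicInt.norm_def, norm_eq_one_iff_toZMod_ne, map_sub, map_pow, map_natCast]
  intro h
  exact hn ⟨toZMod r', by rw [← sq]; linear_combination -h⟩

theorem nonresidue_ne_zero {n : ℕ} (hn : ¬ IsSquare ((n : ZMod v))) : (n : ZMod v) ≠ 0 := by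
  intro h
  exact hn ⟨0, by rw [h, mul_zero]⟩

/-- anisotropy of the quaternary form at the prime `v` itself,
`n` being a non-residue unit. -/
theorem aniso_at_self {n : ℕ} (hn : ¬ IsSquare ((n : ZMod v)))
    (t z u w : ℚ_[v])
    (h : t ^ 2 - (v : ℚ_[v]) * u ^ 2 - (n : ℚ_[v]) * z ^ 2
        + (v : ℚ_[v]) * (n : ℚ_[v]) * w ^ 2 = 0) :
    t = 0 ∧ u = 0 ∧ z = 0 ∧ w = 0 := by
  have hc : ‖(n : ℚ_[v])‖ = 1 := norm_natCast_eq_one n (nonresidue_ne_zero hn)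
  have hns := hns_of_nonresidue n hn
  have hπ : ‖((v : ℕ) : ℚ_[v])‖ = (v : ℝ)⁻¹ := Padic.norm_p
  obtain ⟨h1, h2, h3, h4⟩ := anisotropic_aux (n : ℚ_[v]) (v : ℚ_[v]) hc hns hπ t z u w
    (by linear_combination h)
  exact ⟨h1, h3, h2, h4⟩

/-! ### isotropy away from p, q -/

theorem helper (hv2 : v ≠ 2) (a b : ℕ) (ha : (a : ZMod v) ≠ 0)
    (x y : ZMod v) (hx : x ≠ 0) (hsol : a * x ^ 2 + b * y ^ 2 = 1) :
    ∃ s t : ℤ_[v], a * s ^ 2 + b * t ^ 2 = 1 := by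
  set t : ℤ_[v] := (y.val : ℤ_[v]) with ht
  have hty : toZMod t = y := by rw [ht, map_natCast, ZMod.natCast_rightInverse y]
  set d : ℤ_[v] := 1 - b * t ^ 2 with hd
  have hdz : toZMod d = a * x ^ 2 := by
    rw [hd, map_sub, map_one, map_mul, map_pow, map_natCast, hty]
    linear_combination -hsol
  have aunit : IsUnit ((a : ℕ) : ℤ_[v]) := by
    rw [PadicInt.isUnit_iff, norm_eq_one_iff_toZMod_ne, map_natCast]; exact ha
  obtain ⟨ainv, hainv⟩ := aunit.exists_right_inv
  have hez : toZMod (ainv * d) = x ^ 2 := by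
    refine mul_left_cancel₀ ha ?_
    rw [← map_natCast (toZMod (p := v)), ← map_mul,
      show ((a : ℤ_[v]) * (ainv * d)) = d by rw [← mul_assoc, hainv, one_mul],
      hdz, map_natCast]
  have hene : ‖ainv * d‖ = 1 := by
    rw [norm_eq_one_iff_toZMod_ne, hez]
    exact pow_ne_zero 2 hx
  obtain ⟨s, hs⟩ := isSquare_of_toZMod_isSquare hv2 _ hene ⟨x, by rw [hez, sq]⟩
  refine ⟨s, t, ?_⟩
  have h2 : (a : ℤ_[v]) * s ^ 2 = d := by
    rw [sq, ← hs, ← mul_assoc, hainv, one_mul]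
  rw [h2, hd]; ring

theorem exists_sol (hv2 : v ≠ 2) (a b : ℕ) (ha : (a : ZMod v) ≠ 0) (hb : (b : ZMod v) ≠ 0) :
    ∃ s t : ℤ_[v], a * s ^ 2 + b * t ^ 2 = 1 := by
  obtain ⟨x, y, hxy⟩ : ∃ x y : ZMod v, (a : ZMod v) * x ^ 2 + (b * y ^ 2 - 1) = 0 := by
    have hodd : Fintype.card (ZMod v) % 2 = 1 := by
      rw [ZMod.card]; exact hv.out.eq_two_or_odd.resolve_left hv2
    have hf : degree (C (a : ZMod v) * X ^ 2) = 2 := by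
      rw [degree_C_mul_X_pow 2 ha]; rfl
    have hg : degree (C (b : ZMod v) * X ^ 2 - C 1) = 2 := by
      rw [degree_sub_C (by rw [degree_C_mul_X_pow 2 hb]; norm_num), degree_C_mul_X_pow 2 hb]; rfl
    obtain ⟨x, y, h⟩ := FiniteField.exists_root_sum_quadratic hf hg hodd
    refine ⟨x, y, ?_⟩
    simpa using h
  have hsol : (a : ZMod v) * x ^ 2 + b * y ^ 2 = 1 := by linear_combination hxy
  rcases eq_or_ne x 0 with rfl | hx
  · have hy : y ≠ 0 := by
      intro h0
      rw [h0] at hsol; simp at hsol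
    obtain ⟨s, t, hst⟩ := helper hv2 b a hb y 0 hy (by linear_combination hsol)
    exact ⟨t, s, by linear_combination hst⟩
  · exact helper hv2 a b ha x y hx hsol

/-! ### the prime 2 -/

theorem isSquare_of_mod8 (u : ℤ_[2]) (h : (8 : ℤ_[2]) ∣ (u - 1)) : IsSquare u := by
  have inst : Fact (Nat.Prime 2) := ⟨Nat.prime_two⟩
  set F : Polynomial ℤ_[2] := X ^ 2 - C u with hF
  have h2 : ‖(2 : ℤ_[2])‖ = 2⁻¹ := by
    have := PadicInt.norm_p (p := 2)
    push_cast at this ⊢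
    simpa using this
  have hFa : ‖F.eval 1‖ ≤ 8⁻¹ := by
    obtain ⟨k, hk⟩ := h
    have : F.eval 1 = -(8 * k) := by simp [hF]; linear_combination -hk
    rw [this, norm_neg, norm_mul]
    have h8 : ‖(8 : ℤ_[2])‖ = 8⁻¹ := by
      have : (8 : ℤ_[2]) = 2 ^ 3 := by norm_num
      rw [this, norm_pow, h2]; norm_num
    rw [h8]
    calc (8:ℝ)⁻¹ * ‖k‖ ≤ 8⁻¹ * 1 := by
          gcongr; exact k.norm_le_one
      _ = 8⁻¹ := mul_one _
  have hF' : F.derivative.eval 1 = 2 := by simp [hF]; exact one_add_one_eq_two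
  have hlt : ‖F.eval 1‖ < ‖F.derivative.eval 1‖ ^ 2 := by
    rw [hF', h2]
    calc ‖F.eval 1‖ ≤ 8⁻¹ := hFa
      _ < (2⁻¹ : ℝ) ^ 2 := by norm_num
  obtain ⟨z, hz, -⟩ := hensels_lemma hlt
  refine ⟨z, ?_⟩
  have : z ^ 2 - u = 0 := by simpa [hF] using hz
  rw [← sq]; exact (sub_eq_zero.mp this).symm

theorem two_adic_sol (p q : ℕ) (hp : p % 4 = 1) (hq : q % 2 = 1) :
    ∃ s z : ℤ_[2], (p : ℤ_[2]) * 1 + q * z ^ 2 = s ^ 2 := by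
  have hp8 : p % 8 = 1 ∨ p % 8 = 5 := by omega
  rcases hp8 with h8 | h8
  · have hdvd : (8 : ℤ_[2]) ∣ ((p : ℤ_[2]) - 1) := by
      have : (8 : ℕ) ∣ (p - 1) := by omega
      obtain ⟨k, hk⟩ := this
      exact ⟨k, by push_cast [show p = 8 * k + 1 by omega]; ring⟩
    obtain ⟨s, hs⟩ := isSquare_of_mod8 _ hdvd
    exact ⟨s, 0, by rw [sq s, ← hs]; ring⟩
  · have hdvd : (8 : ℤ_[2]) ∣ ((p + 4 * q : ℕ) : ℤ_[2]) - 1 := by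
      have : (8 : ℕ) ∣ (p + 4 * q - 1) := by omega
      obtain ⟨k, hk⟩ := this
      exact ⟨k, by push_cast [show p + 4 * q = 8 * k + 1 by omega]; ring⟩
    obtain ⟨s, hs⟩ := isSquare_of_mod8 _ hdvd
    refine ⟨s, 2, ?_⟩
    rw [sq s, ← hs]
    push_cast
    ring

end Stmt7Aux
open Quaternion

/-- for distinct odd primes `p, q` with `p ≡ 1 (mod 4)` or
`q ≡ 1 (mod 4)` and `p` not a quadratic residue mod `q`, the reduced discriminant
of `H_ℚ(p,q)` is `pq`; in particular `H_ℚ(p,q)` is a division algebra. -/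
theorem discriminant_eq_p_mul_q
    (p q : ℕ) [Fact p.Prime] [Fact q.Prime] (hp2 : p ≠ 2) (hq2 : q ≠ 2) (hpq : p ≠ q)
    (h1 : p % 4 = 1 ∨ q % 4 = 1) (hres : legendreSym q p = -1) :
    (∀ (v : ℕ) [Fact v.Prime],
        (RatQuatRamifiedAt (p : ℚ) (q : ℚ) v ↔ v = p ∨ v = q)) ∧
      ∀ x : ℍ[ℚ, (p : ℚ), (q : ℚ)], x ≠ 0 → IsUnit x := by
  have hp : Fact p.Prime := inferInstance
  have hq : Fact q.Prime := inferInstance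
  have hqp : legendreSym p q = -1 := by
    rcases h1 with h | h
    · rw [← legendreSym.quadratic_reciprocity_one_mod_four h hq2]; exact hres
    · rw [legendreSym.quadratic_reciprocity_one_mod_four h hp2]; exact hres
  have hnsp : ¬ IsSquare ((q : ZMod p)) := (legendreSym.eq_neg_one_iff' (p := p)).mp hqp
  have hnsq : ¬ IsSquare ((p : ZMod q)) := (legendreSym.eq_neg_one_iff' (p := q)).mp hres
  -- division at p
  have divp : ∀ x : ℍ[ℚ_[p], ((p:ℚ) : ℚ_[p]), ((q:ℚ) : ℚ_[p])], x ≠ 0 → IsUnit x := by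
    rw [Stmt7Aux.division_iff]
    intro x hx h0
    apply hx
    have e1 : (((p:ℚ)) : ℚ_[p]) = ((p:ℕ) : ℚ_[p]) := Rat.cast_natCast p
    have e2 : (((q:ℚ)) : ℚ_[p]) = ((q:ℕ) : ℚ_[p]) := Rat.cast_natCast q
    simp only [Stmt7Aux.qnorm] at h0
    obtain ⟨h1', h2', h3', h4'⟩ := Stmt7Aux.aniso_at_self hnsp x.re x.imJ x.imI x.imK
      (by rw [← e1, ← e2]; linear_combination h0)
    ext <;> simp [h1', h2', h3', h4']
  -- division at q
  have divq : ∀ x : ℍ[ℚ_[q], ((p:ℚ) : ℚ_[q]), ((q:ℚ) : ℚ_[q])], x ≠ 0 → IsUnit x := by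
    rw [Stmt7Aux.division_iff]
    intro x hx h0
    apply hx
    have e1 : (((p:ℚ)) : ℚ_[q]) = ((p:ℕ) : ℚ_[q]) := Rat.cast_natCast p
    have e2 : (((q:ℚ)) : ℚ_[q]) = ((q:ℕ) : ℚ_[q]) := Rat.cast_natCast q
    simp only [Stmt7Aux.qnorm] at h0
    have hc := Stmt7Aux.norm_natCast_eq_one (v := q) p (Stmt7Aux.nonresidue_ne_zero hnsq)
    have hns := Stmt7Aux.hns_of_nonresidue (v := q) p hnsq
    have hπ : ‖((q : ℕ) : ℚ_[q])‖ = (q : ℝ)⁻¹ := Padic.norm_p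
    obtain ⟨h1', h2', h3', h4'⟩ := Stmt7Aux.anisotropic_aux (v := q) _ _ hc hns hπ
      x.re x.imI x.imJ x.imK (by rw [← e1, ← e2]; linear_combination h0)
    ext <;> simp [h1', h2', h3', h4']
  refine ⟨?_, ?_⟩
  · intro v instv
    constructor
    · intro hram
      by_contra hne
      push_neg at hne
      obtain ⟨hvp, hvq⟩ := hne
      rcases eq_or_ne v 2 with rfl | hv2
      · -- the prime 2
        have hqodd : q % 2 = 1 := hq.out.eq_two_or_odd.resolve_left hq2
        have hpodd : p % 2 = 1 := hp.out.eq_two_or_odd.resolve_left hp2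
        have e1 : (((p:ℚ)) : ℚ_[2]) = ((p:ℕ) : ℚ_[2]) := Rat.cast_natCast p
        have e2 : (((q:ℚ)) : ℚ_[2]) = ((q:ℕ) : ℚ_[2]) := Rat.cast_natCast q
        rcases h1 with h4 | h4
        · obtain ⟨s, z, hs⟩ := Stmt7Aux.two_adic_sol p q h4 hqodd
          set x : ℍ[ℚ_[2], ((p:ℚ) : ℚ_[2]), ((q:ℚ) : ℚ_[2])] :=
            ⟨((s : ℤ_[2]) : ℚ_[2]), 1, ((z : ℤ_[2]) : ℚ_[2]), 0⟩ with hxdef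
          have hx : x ≠ 0 := by
            intro h
            have := congrArg QuaternionAlgebra.imI h
            simp [hxdef] at this
          have hq0 : Stmt7Aux.qnorm x = 0 := by
            have := congrArg (fun r : ℤ_[2] => (r : ℚ_[2])) hs
            push_cast at this
            simp only [Stmt7Aux.qnorm, hxdef]
            rw [e1, e2]
            linear_combination -this
          exact Stmt7Aux.not_isUnit_of_qnorm_eq x hx hq0 (hram x hx)
        · obtain ⟨s, z, hs⟩ := Stmt7Aux.two_adic_sol q p h4 hpodd
          set x : ℍ[ℚ_[2], ((p:ℚ) : ℚ_[2]), ((q:ℚ) : ℚ_[2])] :=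
            ⟨((s : ℤ_[2]) : ℚ_[2]), ((z : ℤ_[2]) : ℚ_[2]), 1, 0⟩ with hxdef
          have hx : x ≠ 0 := by
            intro h
            have := congrArg QuaternionAlgebra.imJ h
            simp [hxdef] at this
          have hq0 : Stmt7Aux.qnorm x = 0 := by
            have := congrArg (fun r : ℤ_[2] => (r : ℚ_[2])) hs
            push_cast at this
            simp only [Stmt7Aux.qnorm, hxdef]
            rw [e1, e2]
            linear_combination -this
          exact Stmt7Aux.not_isUnit_of_qnorm_eq x hx hq0 (hram x hx)
      · -- odd primes not dividing pq
        have hp0 : (p : ZMod v) ≠ 0 := by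
          rw [Ne, ZMod.natCast_eq_zero_iff]
          intro hdvd
          exact hvp ((Nat.prime_dvd_prime_iff_eq instv.out hp.out).mp hdvd)
        have hq0 : (q : ZMod v) ≠ 0 := by
          rw [Ne, ZMod.natCast_eq_zero_iff]
          intro hdvd
          exact hvq ((Nat.prime_dvd_prime_iff_eq instv.out hq.out).mp hdvd)
        obtain ⟨s, t, hst⟩ := Stmt7Aux.exists_sol hv2 p q hp0 hq0
        have e1 : (((p:ℚ)) : ℚ_[v]) = ((p:ℕ) : ℚ_[v]) := Rat.cast_natCast p
        have e2 : (((q:ℚ)) : ℚ_[v]) = ((q:ℕ) : ℚ_[v]) := Rat.cast_natCast q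
        set x : ℍ[ℚ_[v], ((p:ℚ) : ℚ_[v]), ((q:ℚ) : ℚ_[v])] :=
          ⟨1, ((s : ℤ_[v]) : ℚ_[v]), ((t : ℤ_[v]) : ℚ_[v]), 0⟩ with hxdef
        have hx : x ≠ 0 := by
          intro h
          have := congrArg QuaternionAlgebra.re h
          simp [hxdef] at this
        have hq0' : Stmt7Aux.qnorm x = 0 := by
          have := congrArg (fun r : ℤ_[v] => (r : ℚ_[v])) hst
          push_cast at this
          simp only [Stmt7Aux.qnorm, hxdef]
          rw [e1, e2]
          linear_combination -this
        exact Stmt7Aux.not_isUnit_of_qnorm_eq x hx hq0' (hram x hx)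
    · rintro (rfl | rfl)
      · intro x hx; exact divp x hx
      · intro x hx; exact divq x hx
  · rw [Stmt7Aux.division_iff]
    intro x hx h0
    apply hx
    simp only [Stmt7Aux.qnorm] at h0
    have hmap := congrArg (fun r : ℚ => (r : ℚ_[p])) h0
    push_cast at hmap
    obtain ⟨h1', h2', h3', h4'⟩ := Stmt7Aux.aniso_at_self hnsp
      ((x.re : ℚ) : ℚ_[p]) ((x.imJ : ℚ) : ℚ_[p]) ((x.imI : ℚ) : ℚ_[p]) ((x.imK : ℚ) : ℚ_[p])
      (by linear_combination hmap)
    have inj : Function.Injective ((↑) : ℚ → ℚ_[p]) := Rat.cast_injective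
    ext
    · exact inj (by rw [h1']; simp)
    · exact inj (by rw [h2']; simp)
    · exact inj (by rw [h3']; simp)
    · exact inj (by rw [h4']; simp)
end
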